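/- Let M be a real symmetric positive semidefinite d×d matrix with largest eigenvalue λ₁ = λ_max(M). If Δ is a real symmetric PSD matrix with trace(Δ) = 1 and trace(M·Δ) = λ₁, then the column space of Δ is contained in the eigenspace of M for λ₁: for every x ∈ ℝ^d, M (Δ x) = λ₁ (Δ x). Consequently rank(Δ) is at most the dimension of the eigenspace { v : M v = λ₁ v }, so if λ₁ has multiplicity at most r then every maximizer Δ of trace(M·Δ) over the trace-one PSD spectraplex has rank at most r. (Rank-r maximizer lemma used in the proof of Theorem 2, part 2.) -/

import Mathlib

open Matrix
open scoped MatrixOrder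

/-- If the trace of `Aᴴ * A` is zero (over ℝ), then `A = 0`. -/
lemma trace_conjTranspose_mul_self_eq_zero' {m n : Type*} [Fintype m] [Fintype n]
    [DecidableEq n] {A : Matrix m n ℝ} (h : (Aᴴ * A).trace = 0) : A = 0 := by
  have hdiag : ∀ j : n, (Aᴴ * A) j j = ∑ i : m, A i j * A i j := by
    intro j
    simp [Matrix.mul_apply, conjTranspose_apply, mul_comm]
  have hnn : ∀ j ∈ Finset.univ (α := n), (0 : ℝ) ≤ (Aᴴ * A) j j := by
    intro j _
    rw [hdiag j]
    exact Finset.sum_nonneg fun i _ => mul_self_nonneg _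
  have hz : ∀ j ∈ Finset.univ (α := n), (Aᴴ * A) j j = 0 :=
    (Finset.sum_eq_zero_iff_of_nonneg hnn).mp h
  ext i j
  have hj := hz j (Finset.mem_univ j)
  rw [hdiag j] at hj
  have := (Finset.sum_eq_zero_iff_of_nonneg
    (fun i _ => mul_self_nonneg (A i j))).mp hj i (Finset.mem_univ i)
  simpa [mul_self_eq_zero] using this

/-- **Rank-r maximizer lemma (proof of Theorem 2, part 2).** If `Δ` is a trace-one PSD
maximizer of `trace(M·Δ)` (achieving the largest eigenvalue `λ₁` of the symmetric PSD
matrix `M`), then the column space of `Δ` lies in the top eigenspace of `M`, so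
`rank(Δ)` is at most the multiplicity of `λ₁`. -/
theorem spectraplex_maximizer_column_space_in_top_eigenspace
    {d : ℕ} (M : Matrix (Fin d) (Fin d) ℝ) (hpsd : M.PosSemidef)
    (lam1 : ℝ) (hlam1 : lam1 = ⨆ i, hpsd.1.eigenvalues i)
    (Δ : Matrix (Fin d) (Fin d) ℝ) (hΔ : Δ.PosSemidef) (htr : Δ.trace = 1)
    (hmax : (M * Δ).trace = lam1) :
    (∀ x : Fin d → ℝ, M.mulVec (Δ.mulVec x) = lam1 • Δ.mulVec x) ∧
    Δ.rank ≤ Module.finrank ℝ (Module.End.eigenspace (Matrix.toLin' M) lam1) ∧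
    ∀ r : ℕ, Module.finrank ℝ (Module.End.eigenspace (Matrix.toLin' M) lam1) ≤ r →
      Δ.rank ≤ r := by
  classical
  have hH := hpsd.1
  set U : Matrix (Fin d) (Fin d) ℝ := (hH.eigenvectorUnitary : Matrix (Fin d) (Fin d) ℝ) with hU
  set N : Matrix (Fin d) (Fin d) ℝ := lam1 • 1 - M with hNdef
  -- N is PSD
  have hle : ∀ i, hH.eigenvalues i ≤ lam1 := by
    intro i
    rw [hlam1]
    exact le_ciSup (Set.Finite.bddAbove (Set.finite_range _)) i
  have hNeq : N = U * Matrix.diagonal (fun i => lam1 - hH.eigenvalues i) * star U := by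
    have hUU : U * star U = 1 := Matrix.mem_unitaryGroup_iff.mp (hH.eigenvectorUnitary).2
    have hdiag : Matrix.diagonal (fun i => lam1 - hH.eigenvalues i)
        = lam1 • (1 : Matrix (Fin d) (Fin d) ℝ)
          - Matrix.diagonal (RCLike.ofReal ∘ hH.eigenvalues) := by
      rw [Matrix.smul_one_eq_diagonal, ← Matrix.diagonal_sub]
      congr 1
    rw [hdiag, Matrix.mul_sub, Matrix.sub_mul, hNdef]
    congr 1
    · rw [Matrix.mul_smul, Matrix.mul_one, Matrix.smul_mul, hUU]
    · exact hH.spectral_theorem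
  have hNpsd : N.PosSemidef := by
    rw [hNeq]
    exact (Matrix.posSemidef_diagonal_iff.mpr
      (fun i => sub_nonneg.2 (hle i))).mul_mul_conjTranspose_same U
  -- trace (N * Δ) = 0
  have htrN : (N * Δ).trace = 0 := by
    rw [hNdef, Matrix.sub_mul, Matrix.trace_sub, Matrix.smul_mul, Matrix.one_mul,
      Matrix.trace_smul, htr, hmax]
    simp
  -- N * Δ = 0
  set S := CFC.sqrt Δ with hSdef
  set T := CFC.sqrt N with hTdef
  have hSS : S * S = Δ := CFC.sqrt_mul_sqrt_self Δ hΔ.nonneg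
  have hTT : T * T = N := CFC.sqrt_mul_sqrt_self N hNpsd.nonneg
  have hSH : Sᴴ = S := (CFC.sqrt_nonneg Δ).posSemidef.1
  have hTH : Tᴴ = T := (CFC.sqrt_nonneg N).posSemidef.1
  have hTS : T * S = 0 := by
    apply trace_conjTranspose_mul_self_eq_zero'
    have h1 : (T * S)ᴴ * (T * S) = S * N * S := by
      rw [Matrix.conjTranspose_mul, hSH, hTH, ← hTT]
      noncomm_ring
    rw [h1, Matrix.trace_mul_cycle, hSS, Matrix.trace_mul_comm, htrN]
  have hNΔ : N * Δ = 0 := by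
    rw [← hTT, ← hSS]
    calc T * T * (S * S) = T * (T * S) * S := by noncomm_ring
    _ = 0 := by rw [hTS, Matrix.mul_zero, Matrix.zero_mul]
  have hMΔ : M * Δ = lam1 • Δ := by
    have : lam1 • Δ - M * Δ = 0 := by
      rw [← hNΔ, hNdef, Matrix.sub_mul, Matrix.smul_mul, Matrix.one_mul]
    linear_combination (norm := noncomm_ring) -this
  have hcol : ∀ x : Fin d → ℝ, M.mulVec (Δ.mulVec x) = lam1 • Δ.mulVec x := by
    intro x
    rw [Matrix.mulVec_mulVec, hMΔ, ← Matrix.smul_mulVec]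
  refine ⟨hcol, ?_, ?_⟩
  · have hrange : LinearMap.range Δ.mulVecLin
        ≤ Module.End.eigenspace (Matrix.toLin' M) lam1 := by
      rintro y ⟨x, rfl⟩
      rw [Module.End.mem_eigenspace_iff]
      simpa [Matrix.toLin'_apply, Matrix.mulVecLin_apply] using hcol x
    exact Submodule.finrank_mono hrange
  · intro r hr
    refine le_trans ?_ hr
    have hrange : LinearMap.range Δ.mulVecLin
        ≤ Module.End.eigenspace (Matrix.toLin' M) lam1 := by
      rintro y ⟨x, rfl⟩
      rw [Module.End.mem_eigenspace_iff]
      simpa [Matrix.toLin'_apply, Matrix.mulVecLin_apply] using hcol x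
    exact Submodule.finrank_mono hrange
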